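/- (Lemma 1: energy error of the Gaussian-filtered state) Define E(τ) = (Σ_{l=1}^{d} e^{−(E_l−E_g)²τ²} p_l E_l)/(Σ_{l=1}^{d} e^{−(E_l−E_g)²τ²} p_l). Then E(τ) − E_g ≤ ((1 − p_g)/p_g)·e^{−Δ̃²τ²}·Δ̃. -/

import Mathlib

lemma key8 (τ Δ x : ℝ) (hτ : 0 < τ) (hΔ : 0 < Δ) (hx : Δ ≤ x) :
    x * Real.exp (-x ^ 2 * τ ^ 2) ≤
      max Δ (Real.sqrt 2 * τ)⁻¹ *
        Real.exp (-(max Δ (Real.sqrt 2 * τ)⁻¹) ^ 2 * τ ^ 2) := by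
  have hs2 : (0:ℝ) < Real.sqrt 2 := Real.sqrt_pos.2 (by norm_num)
  have hs2sq : Real.sqrt 2 ^ 2 = 2 := Real.sq_sqrt (by norm_num)
  have hc : (0:ℝ) < (Real.sqrt 2 * τ)⁻¹ := by positivity
  have hx0 : 0 < x := lt_of_lt_of_le hΔ hx
  rcases le_total Δ (Real.sqrt 2 * τ)⁻¹ with h | h
  · rw [max_eq_right h]
    set c := (Real.sqrt 2 * τ)⁻¹ with hcdef
    have hcτ : c ^ 2 * τ ^ 2 = 1 / 2 := by
      rw [hcdef]
      field_simp
      nlinarith [hs2sq]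
    have hE : x ^ 2 * τ ^ 2 - 1 / 2 + 1 ≤ Real.exp (x ^ 2 * τ ^ 2 - 1 / 2) :=
      Real.add_one_le_exp _
    have hkey : x ≤ c * Real.exp (x ^ 2 * τ ^ 2 - 1 / 2) := by
      have ha : (Real.sqrt 2 * x * τ) ^ 2 = 2 * x ^ 2 * τ ^ 2 := by
        rw [mul_pow, mul_pow, hs2sq]
      have h1 : Real.sqrt 2 * τ * x ≤ x ^ 2 * τ ^ 2 + 1 / 2 := by
        nlinarith [sq_nonneg (Real.sqrt 2 * x * τ - 1), ha]
      have h2 : c * (x ^ 2 * τ ^ 2 + 1 / 2) ≤ c * Real.exp (x ^ 2 * τ ^ 2 - 1 / 2) := by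
        nlinarith [hE, hc]
      have h3 : x = c * (Real.sqrt 2 * τ * x) := by
        rw [hcdef]; field_simp
      nlinarith [hc]
    calc x * Real.exp (-x ^ 2 * τ ^ 2)
        ≤ (c * Real.exp (x ^ 2 * τ ^ 2 - 1 / 2)) * Real.exp (-x ^ 2 * τ ^ 2) :=
          mul_le_mul_of_nonneg_right hkey (Real.exp_pos _).le
      _ = c * Real.exp (-c ^ 2 * τ ^ 2) := by
          rw [mul_assoc, ← Real.exp_add]
          have harg : x ^ 2 * τ ^ 2 - 1 / 2 + -x ^ 2 * τ ^ 2 = -c ^ 2 * τ ^ 2 := by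
            linarith [hcτ]
          rw [harg]
  · rw [max_eq_left h]
    have h1 : 1 ≤ Real.sqrt 2 * τ * Δ := by
      calc (1:ℝ) = (Real.sqrt 2 * τ) * (Real.sqrt 2 * τ)⁻¹ :=
            (mul_inv_cancel₀ (by positivity)).symm
        _ ≤ (Real.sqrt 2 * τ) * Δ := by gcongr
        _ = Real.sqrt 2 * τ * Δ := by ring
    have h2τΔ : 1 ≤ 2 * τ ^ 2 * Δ ^ 2 := by nlinarith [h1, hs2sq, hΔ, hτ]
    have h' : 0 ≤ Δ * (x + Δ) * τ ^ 2 - 1 := by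
      nlinarith [h2τΔ, mul_nonneg (mul_nonneg hΔ.le (sub_nonneg.2 hx)) (sq_nonneg τ)]
    have hE : (x ^ 2 - Δ ^ 2) * τ ^ 2 + 1 ≤ Real.exp ((x ^ 2 - Δ ^ 2) * τ ^ 2) :=
      Real.add_one_le_exp _
    have hkey : x ≤ Δ * Real.exp ((x ^ 2 - Δ ^ 2) * τ ^ 2) := by
      nlinarith [mul_le_mul_of_nonneg_left hE hΔ.le,
        mul_nonneg (sub_nonneg.2 hx) h']
    calc x * Real.exp (-x ^ 2 * τ ^ 2)
        ≤ (Δ * Real.exp ((x ^ 2 - Δ ^ 2) * τ ^ 2)) * Real.exp (-x ^ 2 * τ ^ 2) :=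
          mul_le_mul_of_nonneg_right hkey (Real.exp_pos _).le
      _ = Δ * Real.exp (-Δ ^ 2 * τ ^ 2) := by
          rw [mul_assoc, ← Real.exp_add]
          congr 1
          ring


/-- (Lemma 1: energy error of the Gaussian-filtered state) Let `d ≥ 2`,
`E 0 ≤ E 1 ≤ ⋯ ≤ E (d-1)` with ground energy `E_g = E 0` and gap `Δ = E 1 − E 0 > 0`,
and probabilities `p l ≥ 0`, `∑ p l = 1`, `p_g = p 0 > 0`. For `τ > 0` and
`Δ̃ = max{Δ, (√2·τ)⁻¹}`, the filtered energy
`E(τ) = (∑ e^{−(E_l−E_g)²τ²} p_l E_l)/(∑ e^{−(E_l−E_g)²τ²} p_l)` satisfies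
`E(τ) − E_g ≤ ((1 − p_g)/p_g)·e^{−Δ̃²τ²}·Δ̃`. -/
theorem stmt8 (d : ℕ) (hd : 2 ≤ d) (E : Fin d → ℝ) (hmono : Monotone E)
    (p : Fin d → ℝ) (hp : ∀ l, 0 ≤ p l) (hsum : ∑ l, p l = 1)
    (hpg : 0 < p ⟨0, by omega⟩)
    (hgap : E ⟨0, by omega⟩ < E ⟨1, by omega⟩)
    (τ : ℝ) (hτ : 0 < τ) :
    (∑ l, Real.exp (-(E l - E ⟨0, by omega⟩) ^ 2 * τ ^ 2) * p l * E l) /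
        (∑ l, Real.exp (-(E l - E ⟨0, by omega⟩) ^ 2 * τ ^ 2) * p l) -
      E ⟨0, by omega⟩ ≤
    (1 - p ⟨0, by omega⟩) / p ⟨0, by omega⟩ *
      Real.exp (-(max (E ⟨1, by omega⟩ - E ⟨0, by omega⟩) (Real.sqrt 2 * τ)⁻¹) ^ 2 * τ ^ 2) *
      max (E ⟨1, by omega⟩ - E ⟨0, by omega⟩) (Real.sqrt 2 * τ)⁻¹ := by
  obtain ⟨n, rfl⟩ : ∃ n, d = n + 2 := ⟨d - 2, by omega⟩
  simp only [Fin.mk_zero, Fin.mk_one] at *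
  set Δt := max (E 1 - E 0) (Real.sqrt 2 * τ)⁻¹ with hΔtdef
  have hΔgap : 0 < E 1 - E 0 := sub_pos.2 hgap
  have hΔt : 0 < Δt := lt_max_of_lt_left hΔgap
  set f : Fin (n + 2) → ℝ := fun l => Real.exp (-(E l - E 0) ^ 2 * τ ^ 2) * p l with hfdef
  have hf0 : ∀ l, 0 ≤ f l := fun l => mul_nonneg (Real.exp_pos _).le (hp l)
  set D := ∑ l, f l with hDdef
  have hf0eq : f 0 = p 0 := by simp [hfdef]
  have hDge : p 0 ≤ D := by
    rw [← hf0eq]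
    exact Finset.single_le_sum (fun i _ => hf0 i) (Finset.mem_univ 0)
  have hD0 : 0 < D := lt_of_lt_of_le hpg hDge
  set M := ∑ l, f l * (E l - E 0) with hMdef
  have hM0 : 0 ≤ M :=
    Finset.sum_nonneg fun l _ =>
      mul_nonneg (hf0 l) (sub_nonneg.2 (hmono (Fin.zero_le l)))
  have hnum : (∑ l, f l * E l) - E 0 * D = M := by
    rw [hDdef, hMdef, Finset.mul_sum, ← Finset.sum_sub_distrib]
    exact Finset.sum_congr rfl fun l _ => by ring
  have hratio : (∑ l, f l * E l) / D - E 0 = M / D := by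
    rw [← hnum, sub_div, mul_div_assoc, div_self hD0.ne', mul_one]
  set C := Real.exp (-Δt ^ 2 * τ ^ 2) * Δt with hCdef
  have hC0 : 0 ≤ C := mul_nonneg (Real.exp_pos _).le hΔt.le
  have hMle : M ≤ (1 - p 0) * C := by
    have hsum' : ∑ i : Fin (n + 1), p i.succ = 1 - p 0 := by
      rw [Fin.sum_univ_succ] at hsum; linarith
    rw [hMdef, Fin.sum_univ_succ]
    have h0 : f 0 * (E 0 - E 0) = 0 := by ring
    rw [h0, zero_add, ← hsum', Finset.sum_mul]
    refine Finset.sum_le_sum fun i _ => ?_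
    have hxΔ : E 1 - E 0 ≤ E i.succ - E 0 := by
      have : E 1 ≤ E i.succ := hmono (by
        simp [Fin.le_def, Fin.succ])
      linarith
    have hk := key8 τ (E 1 - E 0) (E i.succ - E 0) hτ hΔgap hxΔ
    calc f i.succ * (E i.succ - E 0)
        = p i.succ * ((E i.succ - E 0) * Real.exp (-(E i.succ - E 0) ^ 2 * τ ^ 2)) := by
          rw [hfdef]; ring
      _ ≤ p i.succ * (Δt * Real.exp (-Δt ^ 2 * τ ^ 2)) :=
          mul_le_mul_of_nonneg_left hk (hp _)
      _ = p i.succ * C := by rw [hCdef]; ring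
  have h1p : 0 ≤ 1 - p 0 := by
    have : ∑ i : Fin (n + 1), p i.succ = 1 - p 0 := by
      rw [Fin.sum_univ_succ] at hsum; linarith
    rw [← this]
    exact Finset.sum_nonneg fun i _ => hp _
  calc (∑ l, f l * E l) / D - E 0 = M / D := hratio
    _ ≤ ((1 - p 0) * C) / p 0 :=
        div_le_div₀ (mul_nonneg h1p hC0) hMle hpg hDge
    _ = (1 - p 0) / p 0 * Real.exp (-Δt ^ 2 * τ ^ 2) * Δt := by
        rw [hCdef]; field_simp
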